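/- Let r_max ≥ 0, let r : ℝ → ℝ be measurable with |r(a)| ≤ r_max for all a ∈ ℝ, and let α > 2·r_max. Define J(μ, σ) = ∫ (r(a) − α·log φ(a; μ, σ))·φ(a; μ, σ) da for (μ, σ) ∈ ℝ × (0, ∞). Then for every μ ∈ ℝ and σ > 0 the partial derivative of J with respect to σ exists and is strictly positive; in particular J has no stationary point, i.e., there is no (μ, σ) ∈ ℝ × (0, ∞) at which both partial derivatives of J (with respect to μ and to σ) exist and vanish. -/

import Mathlib

open MeasureTheory Real Filter

/-- Gaussian density `φ(a; μ, σ) = (2πσ²)^(−1/2) · exp(−(a−μ)²/(2σ²))`. -/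
noncomputable def gpdf (μ σ a : ℝ) : ℝ :=
  (Real.sqrt (2 * Real.pi * σ ^ 2))⁻¹ * Real.exp (-((a - μ) ^ 2) / (2 * σ ^ 2))

/-- The entropy-regularized Gaussian objective
`J(μ, σ) = ∫ (r(a) − α·log φ(a; μ, σ)) · φ(a; μ, σ) da`. -/
noncomputable def Jgauss (r : ℝ → ℝ) (α μ σ : ℝ) : ℝ :=
  ∫ a, (r a - α * Real.log (gpdf μ σ a)) * gpdf μ σ a

lemma gpdf_eq (m s : ℝ) : gpdf m s = ProbabilityTheory.gaussianPDFReal m (s ^ 2).toNNReal := by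
  ext a
  simp [gpdf, ProbabilityTheory.gaussianPDFReal, Real.coe_toNNReal _ (sq_nonneg s)]

lemma gpdf_pos (m : ℝ) {s : ℝ} (hs : 0 < s) (a : ℝ) : 0 < gpdf m s a := by
  rw [gpdf_eq]
  exact ProbabilityTheory.gaussianPDFReal_pos _ _ _
    (by simp [Real.toNNReal_eq_zero, not_le, pow_pos hs, hs.ne'])

lemma integrable_gpdf (m s : ℝ) : Integrable (gpdf m s) := by
  rw [gpdf_eq]; exact ProbabilityTheory.integrable_gaussianPDFReal _ _

lemma integral_gpdf (m : ℝ) {s : ℝ} (hs : 0 < s) : ∫ a, gpdf m s a = 1 := by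
  rw [gpdf_eq]
  exact ProbabilityTheory.integral_gaussianPDFReal_eq_one m
    (by simp [Real.toNNReal_eq_zero, not_le, pow_pos hs, hs.ne'])

lemma measurable_gpdf (m s : ℝ) : Measurable (gpdf m s) := by
  rw [gpdf_eq]; exact ProbabilityTheory.measurable_gaussianPDFReal _ _

lemma integrable_sq_exp {b : ℝ} (hb : 0 < b) :
    Integrable (fun x : ℝ => x ^ 2 * Real.exp (-b * x ^ 2)) := by
  have := integrable_rpow_mul_exp_neg_mul_sq hb (s := 2) (by norm_num)
  simpa [Real.rpow_natCast] using this

lemma tendsto_mul_exp_top {b : ℝ} (hb : 0 < b) :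
    Tendsto (fun x : ℝ => x * Real.exp (-b * x ^ 2)) atTop (nhds 0) := by
  have h := rpow_mul_exp_neg_mul_sq_isLittleO_exp_neg hb 1
  simp only [Real.rpow_one] at h
  have h2 : Tendsto (fun x : ℝ => Real.exp (-(1/2) * x)) atTop (nhds 0) :=
    Real.tendsto_exp_atBot.comp (Tendsto.const_mul_atTop_of_neg (by norm_num) tendsto_id)
  exact h.isBigO.trans_tendsto h2

lemma integral_sq_exp {b : ℝ} (hb : 0 < b) :
    ∫ x : ℝ, x ^ 2 * Real.exp (-b * x ^ 2) = Real.sqrt (π / b) / (2 * b) := by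
  have hderiv : ∀ x : ℝ, HasDerivAt (fun x : ℝ => (-(2*b))⁻¹ * (x * Real.exp (-b * x ^ 2)))
      (x ^ 2 * Real.exp (-b * x ^ 2) - Real.exp (-b * x ^ 2) / (2*b)) x := by
    intro x
    have hexp : HasDerivAt (fun x : ℝ => Real.exp (-b * x ^ 2))
        (Real.exp (-b * x ^ 2) * (-b * (2 * x ^ 1))) x :=
      (((hasDerivAt_pow 2 x).const_mul (-b)).exp)
    have : HasDerivAt (fun y : ℝ => (-(2*b))⁻¹ * (y * Real.exp (-b * y ^ 2)))
        ((-(2*b))⁻¹ * (1 * Real.exp (-b * x ^ 2) + x * (Real.exp (-b * x ^ 2) * (-b * (2 * x ^ 1))))) x :=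
      ((hasDerivAt_id x).mul hexp).const_mul (-(2*b))⁻¹
    convert this using 1
    have hb' : b ≠ 0 := hb.ne'
    field_simp
    ring
  have hint : Integrable (fun x : ℝ =>
      x ^ 2 * Real.exp (-b * x ^ 2) - Real.exp (-b * x ^ 2) / (2*b)) :=
    (integrable_sq_exp hb).sub ((integrable_exp_neg_mul_sq hb).div_const _)
  have htop : Tendsto (fun x : ℝ => (-(2*b))⁻¹ * (x * Real.exp (-b * x ^ 2))) atTop (nhds 0) := by
    simpa using (tendsto_mul_exp_top hb).const_mul (-(2*b))⁻¹
  have hbot : Tendsto (fun x : ℝ => (-(2*b))⁻¹ * (x * Real.exp (-b * x ^ 2))) atBot (nhds 0) := by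
    have h1 : Tendsto (fun x : ℝ => x * Real.exp (-b * x ^ 2)) atBot (nhds 0) := by
      have := ((tendsto_mul_exp_top hb).neg).comp tendsto_neg_atBot_atTop
      simp only [Function.comp_def, neg_neg, neg_sq] at this
      simpa using this
    simpa using h1.const_mul (-(2*b))⁻¹
  have key := integral_of_hasDerivAt_of_tendsto hderiv hint hbot htop
  rw [integral_sub (integrable_sq_exp hb) ((integrable_exp_neg_mul_sq hb).div_const _)] at key
  simp only [sub_zero] at key
  rw [sub_eq_zero] at key
  rw [key, integral_div, integral_gaussian]

lemma gpdf_as_exp (m : ℝ) {s : ℝ} (hs : 0 < s) (a : ℝ) :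
    gpdf m s a = (Real.sqrt (2*π*s^2))⁻¹ * Real.exp (-(2*s^2)⁻¹ * (a-m)^2) := by
  have : -((a-m)^2)/(2*s^2) = -(2*s^2)⁻¹*(a-m)^2 := by ring
  rw [gpdf, this]

lemma integrable_sq_gpdf (m : ℝ) {s : ℝ} (hs : 0 < s) :
    Integrable (fun a => (a - m)^2 * gpdf m s a) := by
  have hb : 0 < (2*s^2)⁻¹ := by positivity
  have h1 : (fun a : ℝ => (a - m)^2 * gpdf m s a)
      = fun a => (Real.sqrt (2*π*s^2))⁻¹ *
        ((fun x => x^2 * Real.exp (-(2*s^2)⁻¹ * x^2)) (a - m)) := by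
    funext a; rw [gpdf_as_exp m hs]; ring
  rw [h1]
  exact (((integrable_sq_exp hb).comp_sub_right m).const_mul _)

lemma integral_sq_gpdf (m : ℝ) {s : ℝ} (hs : 0 < s) :
    ∫ a, (a - m)^2 * gpdf m s a = s^2 := by
  have hb : 0 < (2*s^2)⁻¹ := by positivity
  have h1 : (fun a : ℝ => (a - m)^2 * gpdf m s a)
      = fun a => (Real.sqrt (2*π*s^2))⁻¹ *
        ((fun x => x^2 * Real.exp (-(2*s^2)⁻¹ * x^2)) (a - m)) := by
    funext a; rw [gpdf_as_exp m hs]; ring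
  rw [h1, integral_const_mul,
    integral_sub_right_eq_self (fun x : ℝ => x^2 * Real.exp (-(2*s^2)⁻¹ * x^2)) m,
    integral_sq_exp hb]
  have hX : π/(2*s^2)⁻¹ = 2*π*s^2 := by field_simp
  rw [hX]
  have hpos : 0 < Real.sqrt (2*π*s^2) := Real.sqrt_pos.mpr (by positivity)
  field_simp

noncomputable def dgpdf (m t a : ℝ) : ℝ := gpdf m t a * ((a - m)^2 / t^3 - 1/t)

lemma sqrt_two_pi_sq {t : ℝ} (ht : 0 < t) :
    Real.sqrt (2*π*t^2) = Real.sqrt (2*π) * t := by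
  rw [Real.sqrt_mul (by positivity), Real.sqrt_sq ht.le]

lemma gpdf_eq' (m : ℝ) {t : ℝ} (ht : 0 < t) (a : ℝ) :
    gpdf m t a = ((Real.sqrt (2*π))⁻¹ * t⁻¹) * Real.exp ((-(a-m)^2/2) * (t^2)⁻¹) := by
  rw [gpdf, sqrt_two_pi_sq ht, mul_inv]
  congr 1
  congr 1
  field_simp

lemma gpdf_nonneg (m t a : ℝ) : 0 ≤ gpdf m t a := by
  unfold gpdf; positivity

-- the pointwise bound
lemma dgpdf_bound (m : ℝ) {s x : ℝ} (hs : 0 < s) (hx1 : s/2 < x) (hx2 : x < 3*s/2) (a : ℝ) :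
    |dgpdf m x a| ≤ ((Real.sqrt (2*π))⁻¹ * (s/2)⁻¹)
      * Real.exp ((-(a-m)^2/2) * (((3*s/2)^2)⁻¹) )
      * ((a-m)^2 * (8/s^3) + 2/s) := by
  have hx : 0 < x := lt_trans (by positivity) hx1
  have h1 : |dgpdf m x a| ≤ gpdf m x a * ((a-m)^2/x^3 + 1/x) := by
    rw [dgpdf, abs_mul, abs_of_nonneg (gpdf_nonneg m x a)]
    have : |(a-m)^2/x^3 - 1/x| ≤ (a-m)^2/x^3 + 1/x := by
      refine (abs_sub _ _).trans ?_
      rw [abs_of_nonneg (by positivity), abs_of_nonneg (by positivity)]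
    exact mul_le_mul_of_nonneg_left this (gpdf_nonneg m x a)
  refine h1.trans ?_
  rw [gpdf_eq' m hx a]
  have e1 : ((Real.sqrt (2*π))⁻¹ * x⁻¹) ≤ (Real.sqrt (2*π))⁻¹ * (s/2)⁻¹ := by
    gcongr <;> first | positivity | exact hx1.le
  have e2 : Real.exp ((-(a-m)^2/2) * ((x^2)⁻¹)) ≤
      Real.exp ((-(a-m)^2/2) * (((3*s/2)^2)⁻¹)) := by
    rw [Real.exp_le_exp]
    refine mul_le_mul_of_nonpos_left ?_ (by nlinarith [sq_nonneg (a-m)] : -(a-m)^2/2 ≤ 0)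
    exact inv_anti₀ (pow_pos hx 2) (by nlinarith)
  have e3 : (a-m)^2/x^3 + 1/x ≤ (a-m)^2 * (8/s^3) + 2/s := by
    have p1 : 1/x ≤ 2/s := by
      rw [div_le_div_iff₀ hx hs]; nlinarith
    have p2 : (a-m)^2/x^3 ≤ (a-m)^2 * (8/s^3) := by
      rw [div_le_iff₀ (by positivity : (0:ℝ) < x^3)]
      have h1 : (1:ℝ) ≤ 8/s^3*x^3 := by
        rw [div_mul_eq_mul_div, le_div_iff₀ (by positivity)]
        have h2 : (s/2)^3 ≤ x^3 := pow_le_pow_left₀ (by positivity) hx1.le 3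
        nlinarith
      calc (a-m)^2 = (a-m)^2 * 1 := by ring
        _ ≤ (a-m)^2 * (8/s^3*x^3) := by
            exact mul_le_mul_of_nonneg_left h1 (sq_nonneg _)
        _ = (a-m)^2 * (8/s^3) * x^3 := by ring
    linarith
  exact mul_le_mul (mul_le_mul e1 e2 (Real.exp_nonneg _) (by positivity)) e3
    (by positivity) (by positivity)


lemma hasDerivAt_gpdf (m a : ℝ) {t : ℝ} (ht : 0 < t) :
    HasDerivAt (fun t' => gpdf m t' a) (dgpdf m t a) t := by
  have hne : t ≠ 0 := ht.ne'
  have hu : HasDerivAt (fun t' : ℝ => (Real.sqrt (2*π))⁻¹ * t'⁻¹)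
      ((Real.sqrt (2*π))⁻¹ * (-(t^2)⁻¹)) t := (hasDerivAt_inv hne).const_mul _
  have hw : HasDerivAt (fun t' : ℝ => ((t':ℝ)^2)⁻¹) (-(2*t^1) / (t^2)^2) t :=
    (hasDerivAt_pow 2 t).inv (pow_ne_zero _ hne)
  have hwc : HasDerivAt (fun t' : ℝ => (-(a-m)^2/2) * ((t')^2)⁻¹)
      ((-(a-m)^2/2) * (-(2*t^1) / (t^2)^2)) t := hw.const_mul _
  have hv := hwc.exp
  have hG := hu.mul hv
  have hEq : (fun t' => gpdf m t' a) =ᶠ[nhds t]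
      (fun t' => ((Real.sqrt (2*π))⁻¹ * t'⁻¹) * Real.exp ((-(a-m)^2/2) * ((t')^2)⁻¹)) := by
    filter_upwards [Ioi_mem_nhds ht] with x hx
    exact gpdf_eq' m hx a
  rw [show dgpdf m t a = (Real.sqrt (2*π))⁻¹ * (-(t^2)⁻¹) *
      Real.exp ((-(a-m)^2/2) * (t^2)⁻¹) + ((Real.sqrt (2*π))⁻¹ * t⁻¹) *
      (Real.exp ((-(a-m)^2/2) * (t^2)⁻¹) * ((-(a-m)^2/2) * (-(2*t^1) / (t^2)^2))) from ?_]
  · exact (hG.congr_of_eventuallyEq hEq)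
  · rw [dgpdf, gpdf_eq' m ht a]
    have h2 : Real.sqrt (2*π) ≠ 0 := by positivity
    field_simp
    ring


section main
variable {r_max : ℝ} {r : ℝ → ℝ} (hmeas : Measurable r) (hbd : ∀ a, |r a| ≤ r_max)

include hmeas hbd in
lemma integrable_r_gpdf (m s : ℝ) : Integrable (fun a => r a * gpdf m s a) :=
  (integrable_gpdf m s).bdd_mul hmeas.aestronglyMeasurable (Eventually.of_forall fun a => by
    simpa using hbd a)

include hmeas hbd in
lemma Jgauss_eq (α m : ℝ) {s : ℝ} (hs : 0 < s) :
    Jgauss r α m s = (∫ a, r a * gpdf m s a)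
      + α * (Real.log (Real.sqrt (2*π*s^2)) + 1/2) := by
  have hsq : 0 < Real.sqrt (2*π*s^2) := Real.sqrt_pos.mpr (by positivity)
  have hlog : ∀ a : ℝ, Real.log (gpdf m s a)
      = -Real.log (Real.sqrt (2*π*s^2)) + (-((a-m)^2)/(2*s^2)) := by
    intro a
    rw [gpdf, Real.log_mul (by positivity) (Real.exp_ne_zero _), Real.log_inv, Real.log_exp]
  have hpt : ∀ a : ℝ, (r a - α * Real.log (gpdf m s a)) * gpdf m s a
      = r a * gpdf m s a + (α * Real.log (Real.sqrt (2*π*s^2))) * gpdf m s a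
        + (α * (2*s^2)⁻¹) * ((a-m)^2 * gpdf m s a) := by
    intro a
    rw [hlog a]
    field_simp
    ring
  unfold Jgauss
  simp_rw [hpt]
  have i2 : Integrable (fun a => α * Real.log (Real.sqrt (2*π*s^2)) * gpdf m s a) :=
    (integrable_gpdf m s).const_mul _
  have i3 : Integrable (fun a => α * (2*s^2)⁻¹ * ((a-m)^2 * gpdf m s a)) :=
    (integrable_sq_gpdf m hs).const_mul _
  have i12 : Integrable (fun a => r a * gpdf m s a
      + α * Real.log (Real.sqrt (2*π*s^2)) * gpdf m s a) :=
    (integrable_r_gpdf hmeas hbd m s).add i2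
  rw [integral_add i12 i3, integral_add (integrable_r_gpdf hmeas hbd m s) i2,
    integral_const_mul, integral_const_mul, integral_gpdf m hs, integral_sq_gpdf m hs]
  field_simp
  ring

end main

noncomputable def bnd (r_max m s a : ℝ) : ℝ :=
  r_max * (((Real.sqrt (2*π))⁻¹ * (s/2)⁻¹)
      * Real.exp ((-(a-m)^2/2) * (((3*s/2)^2)⁻¹))
      * ((a-m)^2 * (8/s^3) + 2/s))

lemma integrable_bnd {r_max : ℝ} (hrmax : 0 ≤ r_max) (m : ℝ) {s : ℝ} (hs : 0 < s) :
    Integrable (bnd r_max m s) := by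
  set b2 : ℝ := (2*(3*s/2)^2)⁻¹ with hb2def
  have hb2 : 0 < b2 := by rw [hb2def]; positivity
  set c0 : ℝ := r_max * ((Real.sqrt (2*π))⁻¹ * (s/2)⁻¹) with hc0
  have i1 : Integrable (fun y : ℝ => c0 * (8/s^3) * (y^2 * Real.exp (-b2*y^2))) :=
    (integrable_sq_exp hb2).const_mul _
  have i2 : Integrable (fun y : ℝ => c0 * (2/s) * Real.exp (-b2*y^2)) :=
    (integrable_exp_neg_mul_sq hb2).const_mul _
  have ig := (i1.add i2).comp_sub_right m
  have heq : bnd r_max m s = fun a =>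
      (fun y => c0 * (8/s^3) * (y^2 * Real.exp (-b2*y^2))
        + c0 * (2/s) * Real.exp (-b2*y^2)) (a - m) := by
    funext a
    have harg : (-(a-m)^2/2) * (((3*s/2)^2)⁻¹) = -b2*(a-m)^2 := by
      rw [hb2def]
      field_simp
    rw [bnd, harg, hc0]
    ring
  rw [heq]
  exact ig

lemma measurable_dgpdf (m s : ℝ) : Measurable (dgpdf m s) := by
  unfold dgpdf
  exact (measurable_gpdf m s).mul (by measurability)

section deriv
variable {r_max : ℝ} {r : ℝ → ℝ}

lemma hasDerivAt_F (hrmax : 0 ≤ r_max) (hmeas : Measurable r) (hbd : ∀ a, |r a| ≤ r_max)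
    (m : ℝ) {s : ℝ} (hs : 0 < s) :
    Integrable (fun a => r a * dgpdf m s a) ∧
    HasDerivAt (fun t => ∫ a, r a * gpdf m t a) (∫ a, r a * dgpdf m s a) s := by
  have hball : ∀ x ∈ Metric.ball s (s/2), s/2 < x ∧ x < 3*s/2 := by
    intro x hx
    rw [Metric.mem_ball, Real.dist_eq, abs_sub_lt_iff] at hx
    constructor <;> linarith [hx.1, hx.2]
  refine hasDerivAt_integral_of_dominated_loc_of_deriv_le (F' := fun t a => r a * dgpdf m t a) (Metric.ball_mem_nhds s (half_pos hs))
    (Eventually.of_forall fun t => (hmeas.mul (measurable_gpdf m t)).aestronglyMeasurable)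
    (integrable_r_gpdf hmeas hbd m s)
    ((hmeas.mul (measurable_dgpdf m s)).aestronglyMeasurable)
    (Eventually.of_forall fun a => fun x hx => ?_)
    (integrable_bnd hrmax m hs)
    (Eventually.of_forall fun a => fun x hx => ?_)
  · obtain ⟨h1, h2⟩ := hball x hx
    rw [Real.norm_eq_abs, abs_mul]
    calc |r a| * |dgpdf m x a|
        ≤ r_max * (((Real.sqrt (2*π))⁻¹ * (s/2)⁻¹)
          * Real.exp ((-(a-m)^2/2) * (((3*s/2)^2)⁻¹))
          * ((a-m)^2 * (8/s^3) + 2/s)) :=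
          mul_le_mul (hbd a) (dgpdf_bound m hs h1 h2 a) (abs_nonneg _) hrmax
      _ = bnd r_max m s a := rfl
  · exact (hasDerivAt_gpdf m a (lt_trans (by positivity) (hball x hx).1)).const_mul (r a)

lemma dgpdf_abs_le (m : ℝ) {s : ℝ} (hs : 0 < s) (a : ℝ) :
    |dgpdf m s a| ≤ gpdf m s a * ((a-m)^2/s^3 + 1/s) := by
  rw [dgpdf, abs_mul, abs_of_nonneg (gpdf_nonneg m s a)]
  have : |(a-m)^2/s^3 - 1/s| ≤ (a-m)^2/s^3 + 1/s := by
    refine (abs_sub _ _).trans ?_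
    rw [abs_of_nonneg (by positivity), abs_of_nonneg (by positivity)]
  exact mul_le_mul_of_nonneg_left this (gpdf_nonneg m s a)

lemma D_bound (hrmax : 0 ≤ r_max) (hmeas : Measurable r) (hbd : ∀ a, |r a| ≤ r_max)
    (m : ℝ) {s : ℝ} (hs : 0 < s) :
    |∫ a, r a * dgpdf m s a| ≤ 2*r_max/s := by
  have hint := (hasDerivAt_F hrmax hmeas hbd m hs).1
  have hRHSint : Integrable (fun a =>
      r_max * ((1/s^3) * ((a-m)^2 * gpdf m s a) + (1/s) * gpdf m s a)) :=
    ((((integrable_sq_gpdf m hs).const_mul _)).add ((integrable_gpdf m s).const_mul _)).const_mul _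
  have hpt : ∀ a, |r a * dgpdf m s a|
      ≤ r_max * ((1/s^3) * ((a-m)^2 * gpdf m s a) + (1/s) * gpdf m s a) := by
    intro a
    rw [abs_mul]
    calc |r a| * |dgpdf m s a|
        ≤ r_max * (gpdf m s a * ((a-m)^2/s^3 + 1/s)) :=
          mul_le_mul (hbd a) (dgpdf_abs_le m hs a)
            (abs_nonneg _) hrmax
      _ = r_max * ((1/s^3) * ((a-m)^2 * gpdf m s a) + (1/s) * gpdf m s a) := by ring
  calc |∫ a, r a * dgpdf m s a| ≤ ∫ a, |r a * dgpdf m s a| := by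
        simpa only [Real.norm_eq_abs] using
          norm_integral_le_integral_norm (μ := volume) (fun a => r a * dgpdf m s a)
    _ ≤ ∫ a, r_max * ((1/s^3) * ((a-m)^2 * gpdf m s a) + (1/s) * gpdf m s a) :=
        integral_mono hint.abs hRHSint hpt
    _ = 2*r_max/s := by
        rw [integral_const_mul, integral_add (((integrable_sq_gpdf m hs).const_mul _))
          ((integrable_gpdf m s).const_mul _), integral_const_mul, integral_const_mul,
          integral_sq_gpdf m hs, integral_gpdf m hs]
        field_simp
        ring

lemma hasDerivAt_J (hrmax : 0 ≤ r_max) (hmeas : Measurable r) (hbd : ∀ a, |r a| ≤ r_max)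
    (α m : ℝ) {s : ℝ} (hs : 0 < s) :
    HasDerivAt (fun t => Jgauss r α m t) ((∫ a, r a * dgpdf m s a) + α/s) s := by
  have hF := (hasDerivAt_F hrmax hmeas hbd m hs).2
  have hlogev : (fun t : ℝ => α * (Real.log (Real.sqrt (2*π*t^2)) + 1/2)) =ᶠ[nhds s]
      (fun t => α * Real.log t + α * (Real.log (2*π)/2 + 1/2)) := by
    filter_upwards [Ioi_mem_nhds hs] with t ht
    have ht' : (0:ℝ) < t := ht
    rw [Real.log_sqrt (by positivity), Real.log_mul (by positivity) (by positivity),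
      Real.log_pow]
    push_cast
    ring
  have hlog : HasDerivAt (fun t : ℝ => α * (Real.log (Real.sqrt (2*π*t^2)) + 1/2)) (α/s) s := by
    have h1 : HasDerivAt (fun t : ℝ => α * Real.log t + α * (Real.log (2*π)/2 + 1/2))
        (α * s⁻¹) s := ((Real.hasDerivAt_log hs.ne').const_mul α).add_const _
    have := h1.congr_of_eventuallyEq hlogev
    simpa [div_eq_mul_inv] using this
  have hsum := hF.add hlog
  have hev : (fun t => Jgauss r α m t) =ᶠ[nhds s]
      (fun t => (∫ a, r a * gpdf m t a)
        + α * (Real.log (Real.sqrt (2*π*t^2)) + 1/2)) := by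
    filter_upwards [Ioi_mem_nhds hs] with t ht
    exact Jgauss_eq hmeas hbd α m ht
  exact hsum.congr_of_eventuallyEq hev

end deriv

/-- if `|r| ≤ r_max` and `α > 2·r_max`, then `∂J/∂σ` exists and is
strictly positive everywhere on `ℝ × (0, ∞)`; in particular `J` has no stationary
point. -/
theorem stmt2 (r_max : ℝ) (hrmax : 0 ≤ r_max) (r : ℝ → ℝ) (hmeas : Measurable r)
    (hbd : ∀ a, |r a| ≤ r_max) (α : ℝ) (hα : 2 * r_max < α) :
    (∀ (μ σ : ℝ), 0 < σ →
      DifferentiableAt ℝ (fun σ' => Jgauss r α μ σ') σ ∧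
      0 < deriv (fun σ' => Jgauss r α μ σ') σ) ∧
    ¬ ∃ (μ σ : ℝ), 0 < σ ∧
      (DifferentiableAt ℝ (fun μ' => Jgauss r α μ' σ) μ ∧
        deriv (fun μ' => Jgauss r α μ' σ) μ = 0) ∧
      (DifferentiableAt ℝ (fun σ' => Jgauss r α μ σ') σ ∧
        deriv (fun σ' => Jgauss r α μ σ') σ = 0) := by
  have key : ∀ (μ σ : ℝ), 0 < σ →
      DifferentiableAt ℝ (fun σ' => Jgauss r α μ σ') σ ∧
      0 < deriv (fun σ' => Jgauss r α μ σ') σ := by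
    intro m s hs
    have hJ := hasDerivAt_J hrmax hmeas hbd α m hs
    have hDbd := D_bound hrmax hmeas hbd m hs
    have habs := abs_le.mp hDbd
    have hlt : 2*r_max/s < α/s := by
      apply div_lt_div_of_pos_right hα hs
    have hpos : 0 < (∫ a, r a * dgpdf m s a) + α/s := by
      linarith [habs.1]
    exact ⟨hJ.differentiableAt, by rw [hJ.deriv]; exact hpos⟩
  refine ⟨key, ?_⟩
  rintro ⟨m, s, hs, -, -, hderiv0⟩
  exact absurd hderiv0 (ne_of_gt (key m s hs).2)
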